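/- Let F(x₁,x₂,s) = (x₁-x₂)² s² + (-2x₁x₂(x₁+x₂) + (g₂/2)(x₁+x₂) + g₃) s + x₁²x₂² + (g₂/2)x₁x₂ + g₃(x₁+x₂) + g₂²/16, and P(x) = 2x³ - (g₂/2)x - g₃/2. Then the discriminant of F viewed as a quadratic polynomial in x₁ equals 4·P(x₂)·P(s); that is, writing F = a(x₂,s)x₁² + b(x₂,s)x₁ + c(x₂,s), one has b² - 4ac = 4·P(x₂)·P(s). -/
import Mathlib

theorem stmt_1 (g₂ g₃ x₂ s : ℂ) (P : ℂ → ℂ) (a b c : ℂ)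
    (hP : ∀ x, P x = 2*x^3 - (g₂/2)*x - g₃/2)
    (hF : ∀ x₁ : ℂ, (x₁ - x₂)^2 * s^2
        + (-2*x₁*x₂*(x₁+x₂) + (g₂/2)*(x₁+x₂) + g₃) * s
        + x₁^2*x₂^2 + (g₂/2)*x₁*x₂ + g₃*(x₁+x₂) + g₂^2/16
        = a * x₁^2 + b * x₁ + c) :
    b^2 - 4 * a * c = 4 * P x₂ * P s := by
  have ha : a = s^2 - 2*x₂*s + x₂^2 := by
    linear_combination hF 0 - (hF 1 + hF (-1))/2
  have hb : b = -2*x₂*s^2 - 2*x₂^2*s + (g₂/2)*s + (g₂/2)*x₂ + g₃ := by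
    linear_combination (hF (-1) - hF 1)/2
  have hc : c = x₂^2*s^2 + ((g₂/2)*x₂ + g₃)*s + g₃*x₂ + g₂^2/16 := by
    linear_combination -hF 0
  subst ha hb hc
  rw [hP, hP]
  ring
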